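/- For 0 ≤ 2k ≤ 2p ≤ n, the q-binomial product identity [n choose 2k]_q · [n-2k choose 2p-2k]_q · M_q(2k-1) · M_q(2p-2k-1) = [n choose 2p]_q · M_q(2p-1) · [p choose k]_{q²} holds. -/
import Mathlib

open Polynomial Finset
noncomputable section
abbrev Fq : Type := RatFunc ℚ
def qv : Fq := RatFunc.X
def qint (n : ℕ) : Fq := ∑ i ∈ Finset.range n, qv ^ i
def qfact (n : ℕ) : Fq := ∏ i ∈ Finset.range n, qint (i + 1)
def qbinom (n k : ℕ) : Fq := if k ≤ n then qfact n / (qfact k * qfact (n - k)) else 0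
def qint2 (n : ℕ) : Fq := ∑ i ∈ Finset.range n, qv ^ (2 * i)
def qfact2 (n : ℕ) : Fq := ∏ i ∈ Finset.range n, qint2 (i + 1)
def qbinom2 (n k : ℕ) : Fq := if k ≤ n then qfact2 n / (qfact2 k * qfact2 (n - k)) else 0
def Modd (k : ℕ) : Fq := ∏ j ∈ Finset.range k, qint (2 * j + 1)

lemma qint_eq (n : ℕ) : qint n = algebraMap ℚ[X] Fq (∑ i ∈ Finset.range n, Polynomial.X ^ i) := by
  simp [qint, qv, map_sum, map_pow, RatFunc.algebraMap_X]

lemma qint2_eq (n : ℕ) : qint2 n = algebraMap ℚ[X] Fq (∑ i ∈ Finset.range n, Polynomial.X ^ (2*i)) := by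
  simp [qint2, qv, map_sum, map_pow, RatFunc.algebraMap_X]

lemma poly_ne (n : ℕ) (c : ℕ → ℕ) (hc : c 0 = 0) (hn : 0 < n)
    (hinj : ∀ b, c b = 0 → b = 0) : (∑ i ∈ Finset.range n, (Polynomial.X : ℚ[X]) ^ (c i)) ≠ 0 := by
  intro h
  have h0 := congrArg (fun p => Polynomial.coeff p 0) h
  simp only [Polynomial.finset_sum_coeff, Polynomial.coeff_X_pow, Polynomial.coeff_zero] at h0
  rw [Finset.sum_eq_single 0 (fun b _ hb0 => by
      have hne : c b ≠ 0 := fun hz => hb0 (hinj b hz)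
      simp [eq_comm, hne]) (fun hnot => absurd (Finset.mem_range.mpr hn) hnot)] at h0
  simp [hc] at h0

lemma qint_ne_zero {n : ℕ} (hn : 0 < n) : qint n ≠ 0 := by
  rw [qint_eq]
  apply RatFunc.algebraMap_ne_zero
  have := poly_ne n id rfl hn (fun b h => h)
  simpa using this

lemma qint2_ne_zero {n : ℕ} (hn : 0 < n) : qint2 n ≠ 0 := by
  rw [qint2_eq]
  apply RatFunc.algebraMap_ne_zero
  exact poly_ne n (fun i => 2*i) rfl hn (fun b h => by simpa using h)

lemma qfact_ne_zero (n : ℕ) : qfact n ≠ 0 :=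
  Finset.prod_ne_zero_iff.mpr fun i _ => qint_ne_zero (Nat.succ_pos i)

lemma qfact2_ne_zero (n : ℕ) : qfact2 n ≠ 0 :=
  Finset.prod_ne_zero_iff.mpr fun i _ => qint2_ne_zero (Nat.succ_pos i)

lemma Modd_ne_zero (n : ℕ) : Modd n ≠ 0 :=
  Finset.prod_ne_zero_iff.mpr fun i _ => qint_ne_zero (by omega)

lemma one_add_qv_ne_zero : (1 : Fq) + qv ≠ 0 := by
  have : (1 : Fq) + qv = qint 2 := by simp [qint, Finset.sum_range_succ]
  rw [this]; exact qint_ne_zero (by norm_num)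

lemma qint_two_mul (m : ℕ) : qint (2 * m) = (1 + qv) * qint2 m := by
  induction m with
  | zero => simp [qint, qint2]
  | succ m ih =>
    unfold qint qint2 at *
    rw [show 2 * (m + 1) = 2 * m + 1 + 1 by ring, Finset.sum_range_succ, Finset.sum_range_succ,
      Finset.sum_range_succ, ih]
    ring

lemma qfact_two_mul (m : ℕ) : qfact (2 * m) = Modd m * (1 + qv) ^ m * qfact2 m := by
  induction m with
  | zero => simp [qfact, Modd, qfact2]
  | succ m ih =>
    have h2 : 2 * (m + 1) = 2 * m + 1 + 1 := by ring
    rw [h2]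
    unfold qfact Modd qfact2
    rw [Finset.prod_range_succ, Finset.prod_range_succ]
    unfold qfact Modd qfact2 at ih
    rw [Finset.prod_range_succ, Finset.prod_range_succ]
    rw [ih]
    have : qint (2 * m + 1 + 1) = (1 + qv) * qint2 (m + 1) := by
      have := qint_two_mul (m + 1); rwa [show 2*(m+1) = 2*m+1+1 by ring] at this
    rw [this]
    ring

/-- The q-binomial product identity relating q- and q²-binomials through . -/
theorem stmt_10 (n p k : ℕ) (hkp : k ≤ p) (hpn : 2 * p ≤ n) :
    qbinom n (2 * k) * qbinom (n - 2 * k) (2 * p - 2 * k) * Modd k * Modd (p - k)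
      = qbinom n (2 * p) * Modd p * qbinom2 p k := by
  have h1 : 2 * k ≤ n := by omega
  have h2 : 2 * p - 2 * k ≤ n - 2 * k := by omega
  rw [qbinom, qbinom, qbinom, qbinom2, if_pos h1, if_pos h2, if_pos hpn, if_pos hkp]
  have e1 : n - 2 * k - (2 * p - 2 * k) = n - 2 * p := by omega
  have e2 : 2 * p - 2 * k = 2 * (p - k) := by omega
  rw [e1, e2, qfact_two_mul (p - k), qfact_two_mul k, qfact_two_mul p]
  have hab : (1 + qv) ^ k * (1 + qv) ^ (p - k) = (1 + qv) ^ p := by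
    rw [← pow_add]; congr 1; omega
  have A9 : (1 + qv) ^ k ≠ 0 := pow_ne_zero _ one_add_qv_ne_zero
  have A10 : (1 + qv) ^ (p - k) ≠ 0 := pow_ne_zero _ one_add_qv_ne_zero
  rw [← hab]
  clear hab
  generalize (1 + qv) ^ k = A at A9 ⊢
  generalize (1 + qv) ^ (p - k) = B at A10 ⊢
  have A1 : qfact (n - 2 * k) ≠ 0 := qfact_ne_zero _
  have A2 : qfact (n - 2 * p) ≠ 0 := qfact_ne_zero _
  have A3 : qfact2 k ≠ 0 := qfact2_ne_zero _
  have A4 : qfact2 (p - k) ≠ 0 := qfact2_ne_zero _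
  have A5 : qfact2 p ≠ 0 := qfact2_ne_zero _
  have A6 : Modd k ≠ 0 := Modd_ne_zero _
  have A7 : Modd (p - k) ≠ 0 := Modd_ne_zero _
  have A8 : Modd p ≠ 0 := Modd_ne_zero _
  simp only [div_mul_eq_mul_div, div_mul_div_comm, mul_div_assoc', div_div]
  rw [div_eq_div_iff (by simp only [ne_eq, mul_eq_zero, not_or]; tauto)
    (by simp only [ne_eq, mul_eq_zero, not_or]; tauto)]
  ring
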